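/- A point x in [0,1]^n lies in the convex hull of a subset F of {0,1}^n if and only if there exist sets X_1,...,X_n, each a finite union of half-open subintervals of [0,1), such that the Lebesgue measure of X_i equals x_i for all i, and for every t in [0,1), the 0/1 indicator vector of the set {i : t ∈ X_i} belongs to F. -/
import Mathlib


open MeasureTheory Set

/-- A finite union of half-open subintervals of `[0,1)`. -/
def IsIcoUnion (X : Set ℝ) : Prop :=
  X ⊆ Set.Ico 0 1 ∧ ∃ s : Finset (ℝ × ℝ), X = ⋃ p ∈ s, Set.Ico p.1 p.2

-- auxiliary: disjointness of Ico
lemma ico_disj {a b c d : ℝ} (h : b ≤ c) : Disjoint (Set.Ico a b) (Set.Ico c d) := by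
  rw [Set.disjoint_left]
  rintro t ⟨_, h2⟩ ⟨h3, _⟩
  exact absurd (h2.trans_le h) (not_lt.2 h3)

-- Forward direction core
lemma zuck_forward (n m : ℕ) (F : Set (Fin n → ℝ))
    (hF : ∀ v ∈ F, ∀ i, v i = 0 ∨ v i = 1)
    (x : Fin n → ℝ) (w : ℕ → ℝ) (z : ℕ → (Fin n → ℝ))
    (hw : ∀ k < m, 0 ≤ w k) (hsum : ∑ k ∈ Finset.range m, w k = 1)
    (hz : ∀ k < m, z k ∈ F) (hx : ∑ k ∈ Finset.range m, w k • z k = x) :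
    ∃ X : Fin n → Set ℝ, (∀ i, IsIcoUnion (X i)) ∧
        (∀ i, (volume (X i)).toReal = x i) ∧
        ∀ t ∈ Set.Ico (0:ℝ) 1,
          (fun i => (X i).indicator (fun _ => (1:ℝ)) t) ∈ F := by
  classical
  set c : ℕ → ℝ := fun k => ∑ j ∈ Finset.range k, w j with hc
  have cmono : ∀ {a b : ℕ}, a ≤ b → b ≤ m → c a ≤ c b := by
    intro a b hab hbm
    apply Finset.sum_le_sum_of_subset_of_nonneg (Finset.range_subset_range.2 hab)
    intro j hj _
    exact hw j (lt_of_lt_of_le (Finset.mem_range.1 hj) hbm)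
  have c0 : c 0 = 0 := by simp [hc]
  have cm : c m = 1 := hsum
  have cnonneg : ∀ k ≤ m, 0 ≤ c k := fun k hk => c0 ▸ cmono (Nat.zero_le k) hk
  have cle1 : ∀ k ≤ m, c k ≤ 1 := fun k hk => cm ▸ cmono hk le_rfl
  set X : Fin n → Set ℝ := fun i =>
    ⋃ j ∈ (Finset.range m).filter (fun j => z j i = 1), Set.Ico (c j) (c (j+1)) with hX
  have hdisj : ∀ j < m, ∀ k < m, j ≠ k →
      Disjoint (Set.Ico (c j) (c (j+1))) (Set.Ico (c k) (c (k+1))) := by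
    intro j hj k hk hjk
    rcases hjk.lt_or_gt with h | h
    · exact ico_disj (cmono h hk.le)
    · exact (ico_disj (cmono h hj.le)).symm
  refine ⟨X, ?_, ?_, ?_⟩
  · intro i
    constructor
    · intro t ht
      simp only [hX, Set.mem_iUnion, Finset.mem_filter, Finset.mem_range] at ht
      obtain ⟨j, ⟨hj, _⟩, h1, h2⟩ := ht
      exact ⟨le_trans (cnonneg j hj.le) h1, lt_of_lt_of_le h2 (cle1 (j+1) hj)⟩
    · refine ⟨((Finset.range m).filter (fun j => z j i = 1)).image
        (fun j => (c j, c (j+1))), ?_⟩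
      ext t
      simp only [hX, Set.mem_iUnion, Finset.mem_image]
      constructor
      · rintro ⟨j, hj, ht⟩
        exact ⟨(c j, c (j+1)), ⟨j, hj, rfl⟩, ht⟩
      · rintro ⟨p, ⟨j, hj, rfl⟩, ht⟩
        exact ⟨j, hj, ht⟩
  · intro i
    have hmeas : volume (X i) = ∑ j ∈ (Finset.range m).filter (fun j => z j i = 1),
        volume (Set.Ico (c j) (c (j+1))) := by
      apply measure_biUnion_finset
      · intro j hj k hk hjk
        simp only [Finset.coe_filter, Set.mem_setOf_eq, Finset.mem_range] at hj hk
        exact hdisj j hj.1 k hk.1 hjk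
      · intro j _; exact measurableSet_Ico
    have : (volume (X i)).toReal = ∑ j ∈ (Finset.range m).filter (fun j => z j i = 1), w j := by
      rw [hmeas, ENNReal.toReal_sum (fun j _ => by simp [Real.volume_Ico])]
      apply Finset.sum_congr rfl
      intro j hj
      rw [Real.volume_Ico, ENNReal.toReal_ofReal]
      · simp [hc, Finset.sum_range_succ]
      · simp only [hc]
        rw [Finset.sum_range_succ]
        have := hw j (Finset.mem_range.1 (Finset.mem_filter.1 hj).1)
        linarith
    rw [this, Finset.sum_filter]
    have := congrFun hx i
    simp only [Finset.sum_apply, Pi.smul_apply, smul_eq_mul] at this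
    rw [← this]
    apply Finset.sum_congr rfl
    intro j hj
    rcases hF (z j) (hz j (Finset.mem_range.1 hj)) i with h0 | h1
    · simp [h0]
    · simp [h1]
  · intro t ht
    obtain ⟨ht0, ht1⟩ := ht
    have hm : 0 < m := by
      rcases Nat.eq_zero_or_pos m with h | h
      · subst h; rw [c0] at cm; norm_num at cm
      · exact h
    have hm1 : m - 1 + 1 = m := by omega
    have hPex : ∃ k, t < c (k+1) := ⟨m - 1, by rw [hm1, cm]; exact ht1⟩
    set j := Nat.find hPex with hj
    have hjlt : t < c (j+1) := Nat.find_spec hPex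
    have hjm : j < m := by
      have : j ≤ m - 1 := Nat.find_min' hPex (by rw [hm1, cm]; exact ht1)
      omega
    have hcj : c j ≤ t := by
      rcases Nat.eq_zero_or_pos j with h0 | h0
      · rw [h0, c0]; exact ht0
      · have hj1 : j - 1 + 1 = j := by omega
        have := Nat.find_min hPex (show j - 1 < j by omega)
        push_neg at this
        rwa [hj1] at this
    have htmem : t ∈ Set.Ico (c j) (c (j+1)) := ⟨hcj, hjlt⟩
    have key : ∀ i, t ∈ X i ↔ z j i = 1 := by
      intro i
      constructor
      · intro hti
        simp only [hX, Set.mem_iUnion, Finset.mem_filter, Finset.mem_range] at hti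
        obtain ⟨k, ⟨hk, hzk⟩, htk⟩ := hti
        by_cases hkj : k = j
        · rwa [← hkj]
        · exact absurd (hdisj k hk j hjm hkj) (Set.not_disjoint_iff.2 ⟨t, htk, htmem⟩)
      · intro hzi
        simp only [hX, Set.mem_iUnion, Finset.mem_filter, Finset.mem_range]
        exact ⟨j, ⟨hjm, hzi⟩, htmem⟩
    have : (fun i => (X i).indicator (fun _ => (1:ℝ)) t) = z j := by
      funext i
      rw [Set.indicator_apply]
      rcases hF (z j) (hz j hjm) i with h0 | h1
      · rw [h0, if_neg]
        intro hmem
        rw [(key i).1 hmem] at h0; norm_num at h0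
      · rw [h1, if_pos ((key i).2 h1)]
    rw [this]
    exact hz j hjm

lemma zuck_backward (n : ℕ) (F : Set (Fin n → ℝ)) (x : Fin n → ℝ)
    (X : Fin n → Set ℝ) (hU : ∀ i, IsIcoUnion (X i))
    (hvol : ∀ i, (volume (X i)).toReal = x i)
    (hT : ∀ t ∈ Set.Ico (0:ℝ) 1, (fun i => (X i).indicator (fun _ => (1:ℝ)) t) ∈ F) :
    x ∈ convexHull ℝ F := by
  classical
  have hXm : ∀ i, MeasurableSet (X i) := by
    intro i
    obtain ⟨-, s, hs⟩ := hU i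
    rw [hs]
    exact s.measurableSet_biUnion (fun p _ => measurableSet_Ico)
  set A : (Fin n → Bool) → Set ℝ :=
    fun b => Set.Ico 0 1 ∩ ⋂ i, (if b i then X i else (X i)ᶜ) with hA
  have memA : ∀ b t, t ∈ A b ↔ t ∈ Set.Ico (0:ℝ) 1 ∧ ∀ i, (t ∈ X i ↔ b i = true) := by
    intro b t
    simp only [hA, Set.mem_inter_iff, Set.mem_iInter]
    refine and_congr_right fun _ => forall_congr' fun i => ?_
    cases hbi : b i <;> simp [hbi]
  have hAmeas : ∀ b, MeasurableSet (A b) := by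
    intro b
    refine measurableSet_Ico.inter (MeasurableSet.iInter fun i => ?_)
    by_cases hbi : b i = true <;> simp [hbi, hXm i, (hXm i).compl]
  have hAdisj : ∀ b b' : Fin n → Bool, b ≠ b' → Disjoint (A b) (A b') := by
    intro b b' hbb
    rw [Set.disjoint_left]
    intro t ht ht'
    apply hbb
    funext i
    have h1 := ((memA b t).1 ht).2 i
    have h2 := ((memA b' t).1 ht').2 i
    by_cases h : t ∈ X i
    · rw [h1.1 h, h2.1 h]
    · cases hb : b i <;> cases hb' : b' i <;> simp_all
  have hcover : ⋃ b : Fin n → Bool, A b = Set.Ico (0:ℝ) 1 := by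
    apply Set.Subset.antisymm
    · exact Set.iUnion_subset fun b => Set.inter_subset_left
    · intro t ht
      refine Set.mem_iUnion.2 ⟨fun i => if t ∈ X i then true else false,
        (memA _ t).2 ⟨ht, fun i => ?_⟩⟩
      by_cases h : t ∈ X i <;> simp [h]
  have hsumA : ∑ b : Fin n → Bool, volume (A b) = 1 := by
    rw [← measure_biUnion_finset (fun b _ c _ hbc => hAdisj b c hbc) (fun b _ => hAmeas b)]
    rw [show ⋃ b ∈ (Finset.univ : Finset (Fin n → Bool)), A b = Set.Ico (0:ℝ) 1 from by
      simpa using hcover]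
    simp [Real.volume_Ico]
  have hAfin : ∀ b, volume (A b) ≠ ⊤ := by
    intro b
    refine ne_top_of_le_ne_top ?_ (measure_mono (Set.inter_subset_left : A b ⊆ Set.Ico 0 1))
    simp [Real.volume_Ico]
  set w : (Fin n → Bool) → ℝ := fun b => (volume (A b)).toReal with hw
  set v : (Fin n → Bool) → (Fin n → ℝ) := fun b => fun i => if b i then (1:ℝ) else 0 with hv
  have hwsum : ∑ b : Fin n → Bool, w b = 1 := by
    rw [hw, ← ENNReal.toReal_sum (fun b _ => hAfin b), hsumA, ENNReal.toReal_one]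
  have hXdecomp : ∀ i, X i = ⋃ b ∈ Finset.univ.filter (fun b : Fin n → Bool => b i = true), A b := by
    intro i
    ext t
    simp only [Set.mem_iUnion, Finset.mem_filter, Finset.mem_univ, true_and]
    constructor
    · intro ht
      have htI : t ∈ Set.Ico (0:ℝ) 1 := (hU i).1 ht
      refine ⟨fun j => if t ∈ X j then true else false, by simp [ht], (memA _ t).2 ⟨htI, fun j => ?_⟩⟩
      by_cases h : t ∈ X j <;> simp [h]
    · rintro ⟨b, hbi, htb⟩
      exact (((memA b t).1 htb).2 i).2 hbi
  have hxi : ∀ i, x i = ∑ b ∈ Finset.univ.filter (fun b : Fin n → Bool => b i = true), w b := by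
    intro i
    rw [← hvol i, hXdecomp i,
      measure_biUnion_finset (fun b _ c _ hbc => hAdisj b c hbc) (fun b _ => hAmeas b),
      ENNReal.toReal_sum (fun b _ => hAfin b)]
  set S : Finset (Fin n → Bool) := Finset.univ.filter (fun b => (A b).Nonempty) with hS
  have hwzero : ∀ b ∉ S, w b = 0 := by
    intro b hb
    have : A b = ∅ := by
      rw [hS] at hb
      simp only [Finset.mem_filter, Finset.mem_univ, true_and] at hb
      exact Set.not_nonempty_iff_eq_empty.1 hb
    simp [hw, this]
  have hsumS : ∑ b ∈ S, w b = 1 := by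
    rw [Finset.sum_subset (Finset.subset_univ S) (fun b _ hb => hwzero b hb)]
    exact hwsum
  have hvF : ∀ b ∈ S, v b ∈ F := by
    intro b hb
    rw [hS] at hb
    simp only [Finset.mem_filter, Finset.mem_univ, true_and] at hb
    obtain ⟨t, htb⟩ := hb
    obtain ⟨htI, hiff⟩ := (memA b t).1 htb
    have := hT t htI
    have heq : (fun i => (X i).indicator (fun _ => (1:ℝ)) t) = v b := by
      funext i
      by_cases h : t ∈ X i
      · simp [Set.indicator_apply, hv, h, (hiff i).1 h]
      · have hne : b i ≠ true := fun hbi => h ((hiff i).2 hbi)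
        simp [Set.indicator_apply, hv, h, hne]
    rwa [heq] at this
  have hcm : S.centerMass w v = x := by
    rw [Finset.centerMass_eq_of_sum_1 _ _ hsumS]
    funext i
    rw [show (∑ b ∈ S, w b • v b) i = ∑ b ∈ S, w b * v b i by
      rw [Finset.sum_apply]; rfl]
    rw [Finset.sum_subset (Finset.subset_univ S)
      (fun b _ hb => by rw [hwzero b hb, zero_mul])]
    rw [hxi i, Finset.sum_filter]
    apply Finset.sum_congr rfl
    intro b _
    by_cases hbi : b i = true <;> simp [hv, hbi]
  rw [← hcm]
  exact Finset.centerMass_mem_convexHull S (fun b _ => ENNReal.toReal_nonneg)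
    (hsumS ▸ one_pos) hvF


/-- Zuckerberg's criterion: `x ∈ [0,1]^n` lies in the convex hull of a set `F` of 0/1
vectors iff there are finite unions of half-open intervals `X i ⊆ [0,1)` with
`μ (X i) = x i` and, for every `t ∈ [0,1)`, the indicator vector of `{i : t ∈ X i}`
belongs to `F`. -/
theorem stmt0 (n : ℕ) (F : Set (Fin n → ℝ))
    (hF : ∀ v ∈ F, ∀ i, v i = 0 ∨ v i = 1)
    (x : Fin n → ℝ) (hx : ∀ i, x i ∈ Set.Icc (0:ℝ) 1) :
    x ∈ convexHull ℝ F ↔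
      ∃ X : Fin n → Set ℝ, (∀ i, IsIcoUnion (X i)) ∧
        (∀ i, (volume (X i)).toReal = x i) ∧
        ∀ t ∈ Set.Ico (0:ℝ) 1,
          (fun i => (X i).indicator (fun _ => (1:ℝ)) t) ∈ F := by
  classical
  constructor
  · intro hmem
    obtain ⟨ι, hι, w, z, hw, hsum, hz, hxz⟩ := mem_convexHull_iff_exists_fintype.1 hmem
    set m := Fintype.card ι with hm
    set e : Fin m ≃ ι := (Fintype.equivFin ι).symm with he
    set w' : ℕ → ℝ := fun k => if h : k < m then w (e ⟨k, h⟩) else 0 with hw'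
    set z' : ℕ → (Fin n → ℝ) := fun k => if h : k < m then z (e ⟨k, h⟩) else 0 with hz'
    have hre : ∀ (M : Type) [AddCommMonoid M], ∀ f : ι → M,
        ∑ k ∈ Finset.range m, (fun k => if h : k < m then f (e ⟨k, h⟩) else 0) k
          = ∑ i : ι, f i := by
      intro M _ f
      rw [← Fin.sum_univ_eq_sum_range (fun k => if h : k < m then f (e ⟨k, h⟩) else 0) m]
      rw [← Equiv.sum_comp (Fintype.equivFin ι).symm f]
      apply Finset.sum_congr rfl
      intro k _
      rw [dif_pos k.isLt]
    refine zuck_forward n m F hF x w' z' ?_ ?_ ?_ ?_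
    · intro k hk
      simp only [hw', dif_pos hk]
      exact hw _
    · rw [hw']
      exact (hre ℝ w).trans hsum
    · intro k hk
      simp only [hz', dif_pos hk]
      exact hz _
    · have : ∑ k ∈ Finset.range m, w' k • z' k
          = ∑ k ∈ Finset.range m,
            (fun k => if h : k < m then w (e ⟨k, h⟩) • z (e ⟨k, h⟩) else 0) k := by
        apply Finset.sum_congr rfl
        intro k hk
        have hk' := Finset.mem_range.1 hk
        simp only [hw', hz', dif_pos hk']
      rw [this, hre (Fin n → ℝ) (fun i => w i • z i)]
      exact hxz
  · rintro ⟨X, hU, hvol, hT⟩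
    exact zuck_backward n F x X hU hvol hT
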